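/- Assume liminf_{x→∞} (log P[L > x])/(log P[A > x]) ≥ α for some α > 0, and let b₀ be such that P[L ≤ b₀] > 0 and P[A ≤ b₀] > 0. Then for every ε > 0 there exists n₀ such that for all n ≥ n₀ and all b ≥ b₀, P[N_b > n] ≤ P[A ≤ b]^{n(1−ε)} · n^{−α(1−ε)}. -/

import Mathlib

open MeasureTheory ProbabilityTheory Filter Set Topology ENNReal

/-- The number of retransmissions: the first index `k ≥ 1` with `A k ω > X ω`,
viewed in `ℕ∞` (so it is `⊤` if no such index exists). -/
noncomputable def retransTime {Ω : Type*} (A : ℕ → Ω → ℝ) (X : Ω → ℝ) (ω : Ω) : ℕ∞ :=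
  sInf {m : ℕ∞ | ∃ k : ℕ, m = (k : ℕ∞) ∧ 1 ≤ k ∧ X ω < A k ω}

section Aux

lemma tail_tendsto_zero (ν : Measure ℝ) [IsFiniteMeasure ν] :
    Tendsto (fun n : ℕ => ν (Ioi (n : ℝ))) atTop (𝓝 0) := by
  have h : Tendsto (ν ∘ (fun n : ℕ => Ioi (n : ℝ))) atTop (𝓝 (ν (⋂ n : ℕ, Ioi (n : ℝ)))) := by
    refine tendsto_measure_iInter_atTop (fun n => (measurableSet_Ioi).nullMeasurableSet)
      (fun m n hmn => Ioi_subset_Ioi (by exact_mod_cast hmn)) ⟨0, measure_ne_top ν _⟩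
  have he : (⋂ n : ℕ, Ioi (n : ℝ)) = ∅ := by
    ext x
    simp only [mem_iInter, mem_Ioi, mem_empty_iff_false, iff_false, not_forall, not_lt]
    obtain ⟨n, hn⟩ := exists_nat_gt x
    exact ⟨n, hn.le⟩
  rw [he] at h
  simpa [Function.comp_def] using h

lemma exists_tail_eq (ν : Measure ℝ) [IsProbabilityMeasure ν] [MeasureTheory.NullSingletonClass ν]
    {x₀ : ℝ} {t : ℝ≥0∞} (ht : 0 < t) (ht' : t ≤ ν (Ioi x₀)) :
    ∃ x, x₀ ≤ x ∧ ν (Ioi x) = t := by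
  set S : Set ℝ := {x | t ≤ ν (Ioi x)} with hS
  have hx₀S : x₀ ∈ S := ht'
  have hne : S.Nonempty := ⟨x₀, hx₀S⟩
  obtain ⟨N, hN⟩ : ∃ N : ℕ, ν (Ioi (N : ℝ)) < t := by
    have := (tail_tendsto_zero ν).eventually_lt_const ht
    exact this.exists
  have hbdd : BddAbove S := by
    refine ⟨N, fun x hx => ?_⟩
    by_contra hc
    push_neg at hc
    exact absurd (le_trans hx (measure_mono (Ioi_subset_Ioi hc.le))) hN.not_ge
  set c := sSup S with hc
  have hx₀c : x₀ ≤ c := le_csSup hbdd hx₀S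
  refine ⟨c, hx₀c, le_antisymm ?_ ?_⟩
  · have hseq : Tendsto (ν ∘ (fun n : ℕ => Ioi (c + 1 / (n + 1)))) atTop
        (𝓝 (ν (⋃ n : ℕ, Ioi (c + 1 / (n + 1))))) := by
      refine tendsto_measure_iUnion_atTop (fun m n hmn => Ioi_subset_Ioi ?_)
      have : (1 : ℝ) / (n + 1) ≤ 1 / (m + 1) := by
        apply one_div_le_one_div_of_le (by positivity)
        exact_mod_cast Nat.succ_le_succ hmn
      linarith
    have hun : (⋃ n : ℕ, Ioi (c + 1 / ((n : ℝ) + 1))) = Ioi c := by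
      ext x
      simp only [mem_iUnion, mem_Ioi]
      constructor
      · rintro ⟨n, hn⟩
        have : (0:ℝ) < 1 / ((n:ℝ) + 1) := by positivity
        linarith
      · intro hx
        obtain ⟨n, hn⟩ := exists_nat_one_div_lt (sub_pos.mpr hx)
        exact ⟨n, by linarith⟩
    rw [hun] at hseq
    refine le_of_tendsto hseq (Eventually.of_forall fun n => ?_)
    have hnot : c + 1 / ((n:ℝ) + 1) ∉ S := by
      intro hmem
      have := le_csSup hbdd hmem
      have hp : (0:ℝ) < 1 / ((n:ℝ) + 1) := by positivity
      linarith
    have h2 : ¬ t ≤ ν (Ioi (c + 1 / ((n:ℝ) + 1))) := hnot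
    simpa [one_div] using le_of_not_ge h2
  · have hseq : Tendsto (ν ∘ (fun n : ℕ => Ioi (c - 1 / (n + 1)))) atTop
        (𝓝 (ν (⋂ n : ℕ, Ioi (c - 1 / (n + 1))))) := by
      refine tendsto_measure_iInter_atTop (fun n => measurableSet_Ioi.nullMeasurableSet)
        (fun m n hmn => Ioi_subset_Ioi ?_) ⟨0, measure_ne_top ν _⟩
      have : (1 : ℝ) / (n + 1) ≤ 1 / (m + 1) := by
        apply one_div_le_one_div_of_le (by positivity)
        exact_mod_cast Nat.succ_le_succ hmn
      linarith
    have hin : (⋂ n : ℕ, Ioi (c - 1 / ((n : ℝ) + 1))) = Ici c := by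
      ext x
      simp only [mem_iInter, mem_Ioi, mem_Ici]
      constructor
      · intro h
        by_contra hc'
        push_neg at hc'
        obtain ⟨n, hn⟩ := exists_nat_one_div_lt (sub_pos.mpr hc')
        have := h n
        linarith
      · intro hx n
        have : (0:ℝ) < 1 / ((n:ℝ) + 1) := by positivity
        linarith
    rw [hin] at hseq
    have hIci : t ≤ ν (Ici c) := by
      refine ge_of_tendsto hseq (Eventually.of_forall fun n => ?_)
      have hlt : c - 1 / ((n:ℝ) + 1) < c := by
        have : (0:ℝ) < 1 / ((n:ℝ) + 1) := by positivity
        linarith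
      obtain ⟨y, hyS, hy⟩ := exists_lt_of_lt_csSup hne hlt
      exact le_trans hyS (measure_mono (Ioi_subset_Ioi hy.le))
    calc t ≤ ν (Ici c) := hIci
      _ ≤ ν (Ioi c ∪ {c}) := by
          refine measure_mono ?_
          intro x hx
          rcases eq_or_lt_of_le (mem_Ici.mp hx) with h | h
          · exact Or.inr (by simp [h.symm])
          · exact Or.inl h
      _ ≤ ν (Ioi c) + ν {c} := measure_union_le _ _
      _ = ν (Ioi c) := by simp

lemma retrans_subset {Ω : Type*} (A : ℕ → Ω → ℝ) (X : Ω → ℝ) (n : ℕ) :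
    {ω | (n : ℕ∞) < retransTime A X ω} ⊆ {ω | ∀ k ∈ Finset.Icc 1 n, A k ω ≤ X ω} := by
  intro ω hω k hk
  rw [Finset.mem_Icc] at hk
  by_contra hc
  push_neg at hc
  have hmem : (k : ℕ∞) ∈ {m : ℕ∞ | ∃ k : ℕ, m = (k : ℕ∞) ∧ 1 ≤ k ∧ X ω < A k ω} :=
    ⟨k, rfl, hk.1, hc⟩
  have h1 : retransTime A X ω ≤ (k : ℕ∞) := sInf_le hmem
  have h2 : (k : ℕ∞) ≤ (n : ℕ∞) := by exact_mod_cast hk.2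
  exact absurd (lt_of_lt_of_le (lt_of_lt_of_le hω h1) h2) (lt_irrefl _)

lemma prod_bound {Ω : Type*} [MeasurableSpace Ω] (μ : Measure Ω) [IsProbabilityMeasure μ]
    (A : ℕ → Ω → ℝ) (hAmeas : ∀ i, Measurable (A i))
    (hAindep : iIndepFun A μ)
    (hAident : ∀ i, μ.map (A i) = μ.map (A 0)) (n : ℕ) (x : ℝ) :
    μ (⋂ k ∈ Finset.Icc 1 n, A k ⁻¹' Iic x) = (μ (A 0 ⁻¹' Iic x)) ^ n := by
  have h := hAindep.meas_biInter (S := Finset.Icc 1 n) (s := fun k => A k ⁻¹' Iic x)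
    (fun i _ => ⟨Iic x, measurableSet_Iic, rfl⟩)
  rw [h]
  have heach : ∀ k, μ (A k ⁻¹' Iic x) = μ (A 0 ⁻¹' Iic x) := by
    intro k
    rw [← Measure.map_apply (hAmeas k) measurableSet_Iic, hAident k,
      Measure.map_apply (hAmeas 0) measurableSet_Iic]
  simp only [heach]
  rw [Finset.prod_const, Nat.card_Icc]
  norm_num

lemma core_bound {Ω : Type*} [MeasurableSpace Ω] (μ : Measure Ω) [IsProbabilityMeasure μ]
    (A : ℕ → Ω → ℝ) (X : Ω → ℝ)
    (hAmeas : ∀ i, Measurable (A i))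
    (hAindep : iIndepFun A μ)
    (hAident : ∀ i, μ.map (A i) = μ.map (A 0))
    (hXindep : IndepFun X (fun ω i => A i ω) μ)
    (b : ℝ) (hXb : ∀ᵐ ω ∂μ, X ω ≤ b) (n : ℕ) (x : ℝ) :
    μ {ω | (n : ℕ∞) < retransTime A X ω}
      ≤ (μ (A 0 ⁻¹' Iic x)) ^ n + μ {ω | x < X ω} * (μ (A 0 ⁻¹' Iic b)) ^ n := by
  set Ex : Set Ω := ⋂ k ∈ Finset.Icc 1 n, A k ⁻¹' Iic x with hEx
  set Eb : Set Ω := ⋂ k ∈ Finset.Icc 1 n, A k ⁻¹' Iic b with hEb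
  set Z : Set Ω := {ω | ¬ X ω ≤ b} with hZ
  have hZ0 : μ Z = 0 := by
    have : ∀ᵐ ω ∂μ, ω ∉ Z := by
      filter_upwards [hXb] with ω h
      simpa [hZ] using h
    simpa [ae_iff] using this
  have hsub : {ω | (n : ℕ∞) < retransTime A X ω} ⊆ Ex ∪ ((X ⁻¹' Ioi x ∩ Eb) ∪ Z) := by
    intro ω hω
    have h1 := retrans_subset A X n hω
    by_cases hxb : X ω ≤ b
    · by_cases hxx : X ω ≤ x
      · left
        simp only [hEx, mem_iInter, mem_preimage, mem_Iic]
        exact fun k hk => le_trans (h1 k hk) hxx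
      · right; left
        push_neg at hxx
        refine ⟨hxx, ?_⟩
        simp only [hEb, mem_iInter, mem_preimage, mem_Iic]
        exact fun k hk => le_trans (h1 k hk) hxb
    · right; right; exact hxb
  calc μ {ω | (n : ℕ∞) < retransTime A X ω}
      ≤ μ (Ex ∪ ((X ⁻¹' Ioi x ∩ Eb) ∪ Z)) := measure_mono hsub
    _ ≤ μ Ex + μ ((X ⁻¹' Ioi x ∩ Eb) ∪ Z) := measure_union_le _ _
    _ ≤ μ Ex + (μ (X ⁻¹' Ioi x ∩ Eb) + μ Z) := by
        gcongr
        exact measure_union_le _ _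
    _ = μ Ex + μ (X ⁻¹' Ioi x ∩ Eb) := by rw [hZ0, add_zero]
    _ ≤ (μ (A 0 ⁻¹' Iic x)) ^ n + μ {ω | x < X ω} * (μ (A 0 ⁻¹' Iic b)) ^ n := by
        gcongr
        · exact le_of_eq (prod_bound μ A hAmeas hAindep hAident n x)
        · have hB : Eb = (fun ω i => A i ω) ⁻¹' (⋂ k ∈ Finset.Icc 1 n,
              (fun f : ℕ → ℝ => f k) ⁻¹' Iic b) := by
            ext ω
            simp [hEb]
          have hBmeas : MeasurableSet (⋂ k ∈ Finset.Icc 1 n,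
              (fun f : ℕ → ℝ => f k) ⁻¹' Iic b) :=
            MeasurableSet.biInter (Finset.Icc 1 n).countable_toSet
              (fun k _ => (measurable_pi_apply k) measurableSet_Iic)
          have := hXindep.measure_inter_preimage_eq_mul (Ioi x)
            (⋂ k ∈ Finset.Icc 1 n, (fun f : ℕ → ℝ => f k) ⁻¹' Iic b)
            measurableSet_Ioi hBmeas
          rw [hB, this, ← hB]
          have h3 : {ω | x < X ω} = X ⁻¹' Ioi x := rfl
          rw [h3, prod_bound μ A hAmeas hAindep hAident n b]

lemma one_sub_ge_exp {d t : ℝ} (hd : 0 < d) (h0 : 0 ≤ t) (h1 : t ≤ d / (1 + d)) :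
    Real.exp (-((1 + d) * t)) ≤ 1 - t := by
  have hd1 : (0:ℝ) < 1 + d := by linarith
  have ht1 : t < 1 := lt_of_le_of_lt h1 (by rw [div_lt_one hd1]; linarith)
  have h1' : t * (1 + d) ≤ d := (le_div_iff₀ hd1).mp h1
  have h2 : t / (1 - t) ≤ (1 + d) * t := by
    rw [div_le_iff₀ (by linarith : (0:ℝ) < 1 - t)]
    nlinarith
  have h3 : 1 / (1 - t) ≤ Real.exp (t / (1 - t)) := by
    have hle := Real.add_one_le_exp (t / (1 - t))
    have hne : (1:ℝ) - t ≠ 0 := by linarith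
    have heq : t / (1 - t) + 1 = 1 / (1 - t) := by
      field_simp
      ring
    linarith
  have h4 : Real.exp (-((1 + d) * t)) ≤ Real.exp (-(t / (1 - t))) :=
    Real.exp_le_exp.mpr (by linarith)
  have h5 : Real.exp (-(t / (1 - t))) ≤ 1 - t := by
    rw [Real.exp_neg]
    rw [inv_le_comm₀ (Real.exp_pos _) (by linarith : (0:ℝ) < 1 - t)]
    calc (1 - t)⁻¹ = 1 / (1 - t) := (one_div _).symm
      _ ≤ Real.exp (t / (1 - t)) := h3
  linarith

lemma liminf_extract {f : ℝ → ℝ} {a b : ℝ} (hb : b < a) (ha : 0 < a)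
    (h : a ≤ Filter.liminf f Filter.atTop) : ∀ᶠ x in atTop, b < f x := by
  rw [Filter.liminf_eq] at h
  have hne : {c | ∀ᶠ x in atTop, c ≤ f x}.Nonempty := by
    by_contra hc
    rw [Set.not_nonempty_iff_eq_empty] at hc
    rw [hc, Real.sSup_empty] at h
    linarith
  obtain ⟨c, hcS, hbc⟩ := exists_lt_of_lt_csSup hne (lt_of_lt_of_le hb h)
  exact hcS.mono fun x hx => lt_of_lt_of_le hbc hx

lemma prob_toReal_compl {Ω : Type*} [MeasurableSpace Ω] (μ : Measure Ω)
    [IsProbabilityMeasure μ] {s : Set Ω} (hs : MeasurableSet s) :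
    (μ sᶜ).toReal = 1 - (μ s).toReal := by
  rw [prob_compl_eq_one_sub hs, ENNReal.toReal_sub_of_le prob_le_one one_ne_top,
    ENNReal.toReal_one]

end Aux

set_option maxHeartbeats 1000000 in
/-- Proposition 1, restated: product of power law and geometric bound. -/
theorem retrans_upper_bound
    {Ω : Type*} [MeasurableSpace Ω] (μ : Measure Ω) [IsProbabilityMeasure μ]
    (A : ℕ → Ω → ℝ) (L : Ω → ℝ) (Lb : ℝ → Ω → ℝ)
    (hAmeas : ∀ i, Measurable (A i))
    (hAindep : iIndepFun A μ)
    (hAident : ∀ i, μ.map (A i) = μ.map (A 0))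
    (hAcont : μ.map (A 0) ≪ (volume : Measure ℝ))
    (hLmeas : Measurable L)
    (hLcont : μ.map L ≪ (volume : Measure ℝ))
    (hGpos : ∀ x : ℝ, 0 ≤ x → 0 < (μ {ω | x < A 0 ω}).toReal)
    (hFpos : ∀ x : ℝ, 0 ≤ x → 0 < (μ {ω | x < L ω}).toReal)
    (hLbmeas : ∀ b : ℝ, Measurable (Lb b))
    (hLbindep : ∀ b : ℝ, IndepFun (Lb b) (fun ω i => A i ω) μ)
    (hLbrange : ∀ b : ℝ, 0 < b → ∀ᵐ ω ∂μ, Lb b ω ∈ Set.Icc 0 b)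
    (hLbcdf : ∀ b : ℝ, 0 < b → 0 < (μ {ω | L ω ≤ b}).toReal →
      ∀ x ∈ Set.Icc (0 : ℝ) b,
        (μ {ω | Lb b ω ≤ x}).toReal
          = (μ {ω | L ω ≤ x}).toReal / (μ {ω | L ω ≤ b}).toReal)
    (α : ℝ) (hα : 0 < α)
    (hliminf : α ≤ Filter.liminf
      (fun x : ℝ => Real.log (μ {ω | x < L ω}).toReal / Real.log (μ {ω | x < A 0 ω}).toReal)
      Filter.atTop)
    (b₀ : ℝ) (hb₀ : 0 < b₀)
    (hb₀L : 0 < (μ {ω | L ω ≤ b₀}).toReal)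
    (hb₀A : 0 < (μ {ω | A 0 ω ≤ b₀}).toReal) :
    ∀ ε > (0 : ℝ), ∃ n₀ : ℕ, ∀ n : ℕ, n₀ ≤ n → ∀ b : ℝ, b₀ ≤ b →
      (μ {ω | (n : ℕ∞) < retransTime A (Lb b) ω}).toReal
        ≤ (μ {ω | A 0 ω ≤ b}).toReal ^ ((n : ℝ) * (1 - ε)) * (n : ℝ) ^ (-(α * (1 - ε))) := by
  -- basic notation
  set G : ℝ → ℝ := fun y => (μ {ω | A 0 ω ≤ y}).toReal with hGdef
  set Gbar : ℝ → ℝ := fun y => (μ {ω | y < A 0 ω}).toReal with hGbardef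
  set F : ℝ → ℝ := fun y => (μ {ω | L ω ≤ y}).toReal with hFdef
  set Fbar : ℝ → ℝ := fun y => (μ {ω | y < L ω}).toReal with hFbardef
  have hcomplG : ∀ y : ℝ, {ω | A 0 ω ≤ y}ᶜ = {ω | y < A 0 ω} := by
    intro y; ext ω; simp [not_le]
  have hcomplL : ∀ y : ℝ, {ω | L ω ≤ y}ᶜ = {ω | y < L ω} := by
    intro y; ext ω; simp [not_le]
  have hGbar_eq : ∀ y : ℝ, Gbar y = 1 - G y := by
    intro y
    show (μ {ω | y < A 0 ω}).toReal = 1 - (μ {ω | A 0 ω ≤ y}).toReal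
    rw [← hcomplG y]
    exact prob_toReal_compl μ (measurableSet_le (hAmeas 0) measurable_const)
  have hFbar_eq : ∀ y : ℝ, Fbar y = 1 - F y := by
    intro y
    show (μ {ω | y < L ω}).toReal = 1 - (μ {ω | L ω ≤ y}).toReal
    rw [← hcomplL y]
    exact prob_toReal_compl μ (measurableSet_le hLmeas measurable_const)
  have hGmono : Monotone G := by
    intro y z hyz
    exact ENNReal.toReal_mono (measure_ne_top _ _)
      (measure_mono (fun ω (h : A 0 ω ≤ y) => le_trans h hyz))
  have hFmono : Monotone F := by
    intro y z hyz
    exact ENNReal.toReal_mono (measure_ne_top _ _)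
      (measure_mono (fun ω (h : L ω ≤ y) => le_trans h hyz))
  have hGbaranti : Antitone Gbar := by
    intro y z hyz
    exact ENNReal.toReal_mono (measure_ne_top _ _)
      (measure_mono (fun ω (h : z < A 0 ω) => lt_of_le_of_lt hyz h))
  have hG01 : ∀ y : ℝ, 0 ≤ G y ∧ G y ≤ 1 := by
    intro y
    exact ⟨ENNReal.toReal_nonneg, by
      rw [hGdef]; exact ENNReal.toReal_le_of_le_ofReal zero_le_one (by simpa using prob_le_one)⟩
  have hF01 : ∀ y : ℝ, 0 ≤ F y ∧ F y ≤ 1 := by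
    intro y
    exact ⟨ENNReal.toReal_nonneg, by
      rw [hFdef]; exact ENNReal.toReal_le_of_le_ofReal zero_le_one (by simpa using prob_le_one)⟩
  -- the pushforward of A 0
  set ν : Measure ℝ := μ.map (A 0) with hν
  haveI : IsProbabilityMeasure ν := Measure.isProbabilityMeasure_map (hAmeas 0).aemeasurable
  haveI : MeasureTheory.NullSingletonClass ν := ⟨fun x => hAcont (by simp)⟩
  have hνIoi : ∀ y : ℝ, ν (Ioi y) = μ {ω | y < A 0 ω} := by
    intro y
    rw [hν, Measure.map_apply (hAmeas 0) measurableSet_Ioi]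
    rfl
  -- Step 1: reduce to ε ≤ 1/2
  suffices H : ∀ ε : ℝ, 0 < ε → ε ≤ 1/2 → ∃ n₀ : ℕ, ∀ n : ℕ, n₀ ≤ n → ∀ b : ℝ, b₀ ≤ b →
      (μ {ω | (n : ℕ∞) < retransTime A (Lb b) ω}).toReal
        ≤ G b ^ ((n : ℝ) * (1 - ε)) * (n : ℝ) ^ (-(α * (1 - ε))) by
    intro ε hε
    rcases le_or_gt ε (1/2) with hle | hlt
    · exact H ε hε hle
    · obtain ⟨n₀, hn₀⟩ := H (1/2) (by norm_num) le_rfl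
      refine ⟨max n₀ 1, fun n hn b hb => ?_⟩
      have hn1 : 1 ≤ n := le_trans (le_max_right _ _) hn
      have hn₀' : n₀ ≤ n := le_trans (le_max_left _ _) hn
      have hGb0 : 0 < G b := lt_of_lt_of_le hb₀A (hGmono hb)
      have hGb1 : G b ≤ 1 := (hG01 b).2
      have hn1R : (1:ℝ) ≤ (n:ℝ) := by exact_mod_cast hn1
      calc (μ {ω | (n : ℕ∞) < retransTime A (Lb b) ω}).toReal
          ≤ G b ^ ((n : ℝ) * (1 - 1/2)) * (n : ℝ) ^ (-(α * (1 - 1/2))) := hn₀ n hn₀' b hb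
        _ ≤ G b ^ ((n : ℝ) * (1 - ε)) * (n : ℝ) ^ (-(α * (1 - ε))) := by
            apply mul_le_mul
            · apply Real.rpow_le_rpow_of_exponent_ge hGb0 hGb1
              have : (0:ℝ) ≤ (n:ℝ) := by positivity
              nlinarith
            · apply Real.rpow_le_rpow_of_exponent_le hn1R
              nlinarith
            · positivity
            · positivity
  intro ε hε hε2
  -- constants
  set β : ℝ := α * (1 - ε/2) with hβdef
  have hβpos : 0 < β := by nlinarith
  have hβα : β < α := by nlinarith
  set c : ℝ := (2*α + 2)/ε with hcdef
  have hcpos : 0 < c := by positivity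
  have hcε : c * ε = 2 * α + 2 := by
    rw [hcdef]
    exact div_mul_cancel₀ _ hε.ne'
  -- threshold x₁ from the liminf hypothesis
  obtain ⟨x₁, hx₁b₀, hx₁⟩ : ∃ x₁ : ℝ, b₀ ≤ x₁ ∧ ∀ x, x₁ ≤ x → Fbar x ≤ Gbar x ^ β := by
    have hev := liminf_extract hβα hα hliminf
    have hev2 : ∀ᶠ x : ℝ in atTop, b₀ ≤ x := eventually_ge_atTop b₀
    obtain ⟨x₁, hx₁⟩ := (hev.and hev2).exists_forall_of_atTop
    refine ⟨max x₁ b₀, le_max_right _ _, fun x hx => ?_⟩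
    obtain ⟨h1, h2⟩ := hx₁ x (le_trans (le_max_left _ _) hx)
    -- on such x : Gbar x ∈ (0,1), so log Gbar x < 0
    have hx0 : (0:ℝ) ≤ x := le_trans hb₀.le h2
    have hGbx : 0 < Gbar x := hGpos x hx0
    have hGbx1 : Gbar x < 1 := by
      have := hGbar_eq x
      have := hGmono h2
      have hGb₀ : 0 < G b₀ := hb₀A
      have : G b₀ ≤ G x := hGmono h2
      rw [hGbar_eq x]
      linarith
    have hlogG : Real.log (Gbar x) < 0 := Real.log_neg hGbx hGbx1
    have hFbx : 0 < Fbar x := hFpos x hx0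
    -- from β < log Fbar / log Gbar with log Gbar < 0
    have hmul : Real.log (Fbar x) ≤ β * Real.log (Gbar x) := by
      rw [lt_div_iff_of_neg hlogG] at h1
      linarith [h1]
    calc Fbar x = Real.exp (Real.log (Fbar x)) := (Real.exp_log hFbx).symm
      _ ≤ Real.exp (β * Real.log (Gbar x)) := Real.exp_le_exp.mpr hmul
      _ = Gbar x ^ β := by rw [Real.rpow_def_of_pos hGbx]; ring_nf
  have hx₁0 : 0 < x₁ := lt_of_lt_of_le hb₀ hx₁b₀
  have hGbarx₁ : 0 < Gbar x₁ := hGpos x₁ hx₁0.le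
  -- the sequence t n
  set t : ℕ → ℝ := fun n => c * Real.log n / n with htdef
  have htto : Tendsto t atTop (𝓝 0) := by
    have h1 : Tendsto (fun x : ℝ => Real.log x / x) atTop (𝓝 0) := by
      have := (isLittleO_log_rpow_atTop one_pos).tendsto_div_nhds_zero
      refine this.congr' ?_
      filter_upwards [eventually_gt_atTop (0:ℝ)] with x hx
      rw [Real.rpow_one]
    have h2 : Tendsto (fun n : ℕ => Real.log n / n) atTop (𝓝 0) :=
      h1.comp tendsto_natCast_atTop_atTop
    have := h2.const_mul c
    simpa [htdef, mul_div_assoc] using this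
  -- the key asymptotic for the second term
  have hkey : Tendsto (fun n : ℕ => t n ^ β * (n:ℝ) ^ (α * (1 - ε))) atTop (𝓝 0) := by
    have hs : 0 < α * ε / 2 := by positivity
    have h1 : Tendsto (fun x : ℝ => Real.log x ^ β / x ^ (α * ε / 2)) atTop (𝓝 0) :=
      (isLittleO_log_rpow_rpow_atTop β hs).tendsto_div_nhds_zero
    have h2 : Tendsto (fun x : ℝ => c ^ β * (Real.log x ^ β / x ^ (α * ε / 2))) atTop (𝓝 0) := by
      simpa using h1.const_mul (c ^ β)
    have h3 : Tendsto (fun x : ℝ => (c * Real.log x / x) ^ β * x ^ (α * (1 - ε)))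
        atTop (𝓝 0) := by
      refine h2.congr' ?_
      filter_upwards [eventually_ge_atTop (2:ℝ)] with x hx
      have hx0 : (0:ℝ) < x := by linarith
      have hlx : (0:ℝ) ≤ Real.log x := Real.log_nonneg (by linarith)
      have hclx : (0:ℝ) ≤ c * Real.log x := by positivity
      have hsplit : (c * Real.log x / x) ^ β
          = c ^ β * Real.log x ^ β / x ^ β := by
        rw [Real.div_rpow hclx hx0.le, Real.mul_rpow hcpos.le hlx]
      have hxβ : x ^ β = x ^ (α * ε / 2) * x ^ (α * (1 - ε)) := by
        rw [← Real.rpow_add hx0, hβdef]; ring_nf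
      rw [hsplit, hxβ]
      have hp1 : (0:ℝ) < x ^ (α * ε / 2) := Real.rpow_pos_of_pos hx0 _
      have hp2 : (0:ℝ) < x ^ (α * (1 - ε)) := Real.rpow_pos_of_pos hx0 _
      field_simp
    have := h3.comp tendsto_natCast_atTop_atTop
    simpa [htdef, Function.comp_def] using this
  -- gather the eventual conditions
  have hev : ∀ᶠ n : ℕ in atTop,
      2 ≤ n ∧ t n ≤ (ε/2) / (1 + ε/2) ∧ t n ≤ Gbar x₁ ∧
        t n ^ β * (n:ℝ) ^ (α * (1 - ε)) ≤ F b₀ / 2 := by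
    have e1 : ∀ᶠ n : ℕ in atTop, 2 ≤ n := eventually_ge_atTop 2
    have e2 : ∀ᶠ n : ℕ in atTop, t n ≤ (ε/2) / (1 + ε/2) :=
      htto.eventually_le_const (by positivity)
    have e3 : ∀ᶠ n : ℕ in atTop, t n ≤ Gbar x₁ := htto.eventually_le_const hGbarx₁
    have e4 : ∀ᶠ n : ℕ in atTop, t n ^ β * (n:ℝ) ^ (α * (1 - ε)) ≤ F b₀ / 2 :=
      hkey.eventually_le_const (by positivity)
    filter_upwards [e1, e2, e3, e4] with n h1 h2 h3 h4
    exact ⟨h1, h2, h3, h4⟩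
  obtain ⟨n₀, hn₀⟩ := eventually_atTop.mp hev
  refine ⟨n₀, fun n hn b hb => ?_⟩
  obtain ⟨hn2, htεsmall, htGx₁, hterm2⟩ := hn₀ n hn
  -- basic facts about n, b
  have hb0 : (0:ℝ) < b := lt_of_lt_of_le hb₀ hb
  have hn2R : (2:ℝ) ≤ (n:ℝ) := by exact_mod_cast hn2
  have hn0R : (0:ℝ) < (n:ℝ) := by linarith
  have hn1R : (1:ℝ) ≤ (n:ℝ) := by linarith
  have hlogn : 0 < Real.log n := Real.log_pos (by linarith)
  have hlog2n : Real.log 2 ≤ Real.log n := Real.log_le_log two_pos hn2R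
  have htpos : 0 < t n := by
    rw [htdef]
    exact div_pos (mul_pos hcpos hlogn) hn0R
  have htsmall1 : t n < 1 := by
    have h1 : (ε/2) / (1 + ε/2) < 1 := by
      rw [div_lt_one (by linarith)]
      linarith
    linarith
  -- choose x_n with tail exactly t n
  obtain ⟨xn, hxnx₁, hxn⟩ := exists_tail_eq ν (ENNReal.ofReal_pos.mpr htpos)
    (by
      rw [hνIoi]
      exact ENNReal.ofReal_le_of_le_toReal htGx₁)
  have hGbarxn : Gbar xn = t n := by
    show (μ {ω | xn < A 0 ω}).toReal = t n
    rw [← hνIoi, hxn, ENNReal.toReal_ofReal htpos.le]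
  have hGxn : G xn = 1 - t n := by
    have := hGbar_eq xn
    rw [hGbarxn] at this
    linarith
  have hxnb₀ : b₀ ≤ xn := le_trans hx₁b₀ hxnx₁
  have hxn0 : (0:ℝ) < xn := lt_of_lt_of_le hb₀ hxnb₀
  -- facts about G b
  have hGb0 : 0 < G b := lt_of_lt_of_le hb₀A (hGmono hb)
  have hGb1 : G b ≤ 1 := (hG01 b).2
  have hGb₀0 : 0 < G b₀ := hb₀A
  have hXb : ∀ᵐ ω ∂μ, Lb b ω ≤ b := (hLbrange b hb0).mono fun ω h => h.2
  -- generic conversion of the core bound to reals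
  have hconv : ∀ x' : ℝ, (μ {ω | (n : ℕ∞) < retransTime A (Lb b) ω}).toReal
      ≤ G x' ^ n + (μ {ω | x' < Lb b ω}).toReal * G b ^ n := by
    intro x'
    have hcore := core_bound μ A (Lb b) hAmeas hAindep hAident (hLbindep b) b hXb n x'
    have hne1 : (μ (A 0 ⁻¹' Iic x')) ^ n ≠ ⊤ := ENNReal.pow_ne_top (measure_ne_top μ _)
    have hne2 : μ {ω | x' < Lb b ω} * (μ (A 0 ⁻¹' Iic b)) ^ n ≠ ⊤ :=
      ENNReal.mul_ne_top (measure_ne_top μ _) (ENNReal.pow_ne_top (measure_ne_top μ _))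
    have h1 := ENNReal.toReal_mono (ENNReal.add_ne_top.mpr ⟨hne1, hne2⟩) hcore
    rw [ENNReal.toReal_add hne1 hne2, ENNReal.toReal_mul, ENNReal.toReal_pow,
      ENNReal.toReal_pow] at h1
    exact h1
  -- the exponent bound helpers
  have hexp_nat : ∀ y : ℝ, 0 < y → y ^ n = y ^ ((n:ℝ) : ℝ) := by
    intro y hy
    rw [Real.rpow_natCast]
  -- CASE ANALYSIS
  rcases le_or_gt b xn with hcase | hcase
  · -- Case b ≤ xn : crude geometric bound suffices
    have hz : (μ {ω | b < Lb b ω}).toReal = 0 := by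
      have h0 : μ {ω | b < Lb b ω} = 0 := by
        have hae : ∀ᵐ ω ∂μ, ω ∉ {ω | b < Lb b ω} := by
          filter_upwards [hXb] with ω h
          simpa using h
        simpa [ae_iff] using hae
      rw [h0]; rfl
    have h1 := hconv b
    rw [hz, zero_mul, add_zero] at h1
    -- G b ^ n ≤ G b ^ (n (1-ε)) * n ^ (-(α(1-ε)))
    have hGxnval : G b ≤ 1 - t n := by
      rw [← hGxn]; exact hGmono hcase
    have hsplit : G b ^ n = G b ^ ((n:ℝ) * (1 - ε)) * G b ^ ((n:ℝ) * ε) := by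
      rw [← Real.rpow_add hGb0, hexp_nat _ hGb0]
      ring_nf
    have hb1 : G b ^ ((n:ℝ) * ε) ≤ Real.exp (- t n) ^ ((n:ℝ) * ε) := by
      apply Real.rpow_le_rpow (hG01 b).1 _ (by positivity)
      calc G b ≤ 1 - t n := hGxnval
        _ ≤ Real.exp (- t n) := by
            have := Real.add_one_le_exp (- t n)
            linarith
    have hb2 : Real.exp (- t n) ^ ((n:ℝ) * ε) = (n:ℝ) ^ (-(c * ε)) := by
      rw [← Real.exp_mul, Real.rpow_def_of_pos hn0R]
      congr 1
      rw [htdef]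
      field_simp
    have hb3 : (n:ℝ) ^ (-(c * ε)) ≤ (n:ℝ) ^ (-(α * (1 - ε))) := by
      apply Real.rpow_le_rpow_of_exponent_le hn1R
      have hαε : 0 < α * ε := mul_pos hα hε
      have hexpand : α * (1 - ε) = α - α * ε := by ring
      linarith [hcε, hαε, hexpand]
    calc (μ {ω | (n : ℕ∞) < retransTime A (Lb b) ω}).toReal
        ≤ G b ^ n := h1
      _ = G b ^ ((n:ℝ) * (1 - ε)) * G b ^ ((n:ℝ) * ε) := hsplit
      _ ≤ G b ^ ((n:ℝ) * (1 - ε)) * (n:ℝ) ^ (-(α * (1 - ε))) := by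
          apply mul_le_mul_of_nonneg_left _ (by positivity)
          calc G b ^ ((n:ℝ) * ε) ≤ Real.exp (- t n) ^ ((n:ℝ) * ε) := hb1
            _ = (n:ℝ) ^ (-(c * ε)) := hb2
            _ ≤ (n:ℝ) ^ (-(α * (1 - ε))) := hb3
  · -- Case xn < b
    have h1 := hconv xn
    set R : ℝ := G b ^ ((n:ℝ) * (1 - ε)) * (n:ℝ) ^ (-(α * (1 - ε))) with hRdef
    have hRpos : 0 < R := by
      rw [hRdef]
      positivity
    -- first term bound
    have hT1 : G xn ^ n ≤ (1/2) * R := by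
      -- G xn ^ n ≤ exp (- c log n) = n ^ (-c)
      have ht1 : G xn ^ n ≤ (n:ℝ) ^ (-c) := by
        rw [hGxn]
        have hstep : (1 - t n) ^ n ≤ Real.exp (- t n) ^ n := by
          apply pow_le_pow_left₀ (by linarith) _ n
          have := Real.add_one_le_exp (- t n)
          linarith
        calc (1 - t n) ^ n ≤ Real.exp (- t n) ^ n := hstep
          _ = Real.exp (- t n * n) := by rw [← Real.exp_nat_mul]; ring_nf
          _ = Real.exp (-(c * Real.log n)) := by
              congr 1
              rw [htdef]
              field_simp
          _ = (n:ℝ) ^ (-c) := by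
              rw [Real.rpow_def_of_pos hn0R]
              congr 1
              ring
      -- lower bound for G b ^ (n(1-ε))
      have hGblow : (n:ℝ) ^ (-((1 - ε/2) * c)) ≤ G b ^ ((n:ℝ) * (1 - ε)) := by
        have hGbxn : 1 - t n ≤ G b := by
          rw [← hGxn]
          exact hGmono hcase.le
        have hexp1 : Real.exp (-((1 + ε/2) * t n)) ≤ G b :=
          le_trans (one_sub_ge_exp (by positivity) htpos.le htεsmall) hGbxn
        have h2 : Real.exp (-((1 + ε/2) * t n)) ^ ((n:ℝ) * (1 - ε)) ≤ G b ^ ((n:ℝ) * (1 - ε)) :=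
          Real.rpow_le_rpow (Real.exp_pos _).le hexp1
            (mul_nonneg hn0R.le (by linarith))
        refine le_trans ?_ h2
        rw [← Real.exp_mul, Real.rpow_def_of_pos hn0R]
        apply Real.exp_le_exp.mpr
        have htn : t n * (n:ℝ) = c * Real.log n := by
          rw [htdef]
          field_simp
        have hexpand : -((1 + ε/2) * t n) * ((n:ℝ) * (1 - ε))
            = -((1 + ε/2) * (1 - ε) * (c * Real.log n)) := by
          rw [← htn]; ring
        rw [hexpand]
        have hsq : 0 ≤ ε^2 := sq_nonneg ε
        have hcoefeq : (1 + ε/2) * (1 - ε) = 1 - ε/2 - ε^2/2 := by ring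
        have hcoef : (1 + ε/2) * (1 - ε) ≤ 1 - ε/2 := by linarith
        have hcln : 0 ≤ c * Real.log n := by positivity
        have hmul := mul_le_mul_of_nonneg_right hcoef hcln
        calc Real.log (n:ℝ) * -((1 - ε/2) * c) = -((1 - ε/2) * (c * Real.log n)) := by ring
          _ ≤ -((1 + ε/2) * (1 - ε) * (c * Real.log n)) := by linarith
      -- combine
      have hfinal : (n:ℝ) ^ (-c) ≤ (1/2) * ((n:ℝ) ^ (-((1 - ε/2) * c)) * (n:ℝ) ^ (-(α * (1 - ε)))) := by
        rw [← Real.rpow_add hn0R]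
        rw [Real.rpow_def_of_pos hn0R, Real.rpow_def_of_pos hn0R]
        have h2exp : (2:ℝ) ≤ Real.exp ((1 + α * ε) * Real.log n) := by
          calc (2:ℝ) = Real.exp (Real.log 2) := (Real.exp_log two_pos).symm
            _ ≤ Real.exp ((1 + α * ε) * Real.log n) := by
                apply Real.exp_le_exp.mpr
                have hαε : 0 ≤ α * ε := (mul_pos hα hε).le
                have h1 : Real.log n ≤ (1 + α * ε) * Real.log n :=
                  le_mul_of_one_le_left hlogn.le (by linarith)
                linarith
        have heq : Real.log n * (-((1 - ε/2) * c) + -(α * (1 - ε)))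
            = Real.log n * (-c) + (1 + α * ε) * Real.log n := by
          linear_combination (Real.log (n:ℝ) / 2) * hcε
        rw [heq, Real.exp_add]
        have hE : 0 < Real.exp (Real.log n * (-c)) := Real.exp_pos _
        have hmul := mul_le_mul_of_nonneg_left h2exp hE.le
        linarith
      calc G xn ^ n ≤ (n:ℝ) ^ (-c) := ht1
        _ ≤ (1/2) * ((n:ℝ) ^ (-((1 - ε/2) * c)) * (n:ℝ) ^ (-(α * (1 - ε)))) := hfinal
        _ ≤ (1/2) * R := by
            rw [hRdef]
            have h9 := mul_le_mul_of_nonneg_right hGblow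
              (le_of_lt (Real.rpow_pos_of_pos hn0R (-(α * (1 - ε)))))
            linarith
    -- second term bound
    have hT2 : (μ {ω | xn < Lb b ω}).toReal * G b ^ n ≤ (1/2) * R := by
      have hFb : 0 < F b := lt_of_lt_of_le hb₀L (hFmono hb)
      have hcdf := hLbcdf b hb0 hFb xn ⟨hxn0.le, hcase.le⟩
      have hcompl : {ω | Lb b ω ≤ xn}ᶜ = {ω | xn < Lb b ω} := by
        ext ω; simp [not_le]
      have hLbtail : (μ {ω | xn < Lb b ω}).toReal = 1 - F xn / F b := by
        rw [← hcompl, prob_toReal_compl μ (measurableSet_le (hLbmeas b) measurable_const),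
          hcdf]
      have hFxn1 : F xn ≤ 1 := (hF01 xn).2
      have hFb1 : F b ≤ 1 := (hF01 b).2
      have hFxnb : F xn ≤ F b := hFmono hcase.le
      have hFbb₀ : F b₀ ≤ F b := hFmono hb
      have hstep1 : (μ {ω | xn < Lb b ω}).toReal ≤ Fbar xn / F b₀ := by
        rw [hLbtail, hFbar_eq]
        have heq2 : 1 - F xn / F b = (F b - F xn) / F b := by
          field_simp
        rw [heq2]
        apply div_le_div₀ (by linarith) (by linarith) hb₀L hFbb₀
      have hstep2 : Fbar xn ≤ t n ^ β := by
        rw [← hGbarxn]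
        exact hx₁ xn hxnx₁
      have hstep3 : t n ^ β / F b₀ ≤ (1/2) * (n:ℝ) ^ (-(α * (1 - ε))) := by
        have hp : (0:ℝ) < (n:ℝ) ^ (α * (1 - ε)) := Real.rpow_pos_of_pos hn0R _
        have h6 : t n ^ β ≤ F b₀ / 2 / ((n:ℝ) ^ (α * (1 - ε))) :=
          (le_div_iff₀ hp).mpr hterm2
        have h7 : F b₀ / 2 / ((n:ℝ) ^ (α * (1 - ε)))
            = 1/2 * ((n:ℝ) ^ (α * (1 - ε)))⁻¹ * F b₀ := by
          field_simp
        rw [div_le_iff₀ hb₀L, Real.rpow_neg hn0R.le]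
        linarith
      have hGbn : G b ^ n ≤ G b ^ ((n:ℝ) * (1 - ε)) := by
        rw [hexp_nat _ hGb0]
        apply Real.rpow_le_rpow_of_exponent_ge hGb0 hGb1
        have hnε : 0 ≤ (n:ℝ) * ε := mul_nonneg hn0R.le hε.le
        have hexpand : (n:ℝ) * (1 - ε) = (n:ℝ) - (n:ℝ) * ε := by ring
        linarith
      have htβ : 0 ≤ t n ^ β := Real.rpow_nonneg htpos.le _
      calc (μ {ω | xn < Lb b ω}).toReal * G b ^ n
          ≤ (t n ^ β / F b₀) * G b ^ ((n:ℝ) * (1 - ε)) := by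
            apply mul_le_mul _ hGbn (by positivity) (div_nonneg htβ hb₀L.le)
            refine le_trans hstep1 ?_
            gcongr
        _ ≤ ((1/2) * (n:ℝ) ^ (-(α * (1 - ε)))) * G b ^ ((n:ℝ) * (1 - ε)) := by
            apply mul_le_mul_of_nonneg_right hstep3 (by positivity)
        _ = (1/2) * R := by
            rw [hRdef]; ring
    calc (μ {ω | (n : ℕ∞) < retransTime A (Lb b) ω}).toReal
        ≤ G xn ^ n + (μ {ω | xn < Lb b ω}).toReal * G b ^ n := h1
      _ ≤ (1/2) * R + (1/2) * R := add_le_add hT1 hT2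
      _ = R := by ring
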